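/- For j, k ≥ 2 with j < k, the thin set theorem for j colors is not Weihrauch reducible to the thin set theorem for k colors on ℕ (exponent 1): there are no Turing functionals Φ, Ψ such that for every f : ℕ → Fin j, Φ(f) is a coloring ℕ → Fin k, and for every infinite set T thin for Φ(f), Ψ(f, T) is an infinite set thin for f. -/

import Mathlib

/-- A (total-style) Turing functional, given by a computable, monotone
approximation function mapping finite oracle prefixes to output values. -/
structure TuringFunctional where
  approx : List ℕ → ℕ → Option ℕ
  computable : Computable₂ approx
  mono : ∀ {l₁ l₂ : List ℕ} {n a : ℕ}, l₁ <+: l₂ → approx l₁ n = some a → approx l₂ n = some a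

/-- `Φ.evalsTo X Y` means the functional `Φ` with oracle `X` converges everywhere
and computes the total function `Y`. -/
def TuringFunctional.evalsTo (Φ : TuringFunctional) (X Y : ℕ → ℕ) : Prop :=
  ∀ n, ∃ m, Φ.approx ((List.range m).map X) n = some (Y n)

/-- Effective join of two oracles. -/
def join2 (X Y : ℕ → ℕ) : ℕ → ℕ := fun n => if n % 2 = 0 then X (n / 2) else Y (n / 2)

/-- Code a boolean-valued function (a set) as an oracle. -/
def bc (X : ℕ → Bool) : ℕ → ℕ := fun n => Bool.toNat (X n)

/-- Effective join of a countable sequence of sets into a single oracle. -/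
def seqJoin (A : ℕ → ℕ → Bool) : ℕ → ℕ := fun n => Bool.toNat (A n.unpair.1 n.unpair.2)

namespace Stmt16Aux

lemma prefix_map_range {X Y : ℕ → ℕ} {a b : ℕ} (hab : a ≤ b) (h : ∀ i < a, X i = Y i) :
    (List.range a).map X <+: (List.range b).map Y := by
  have h1 : (List.range a).map X = ((List.range b).map Y).take a := by
    rw [← List.map_take, List.take_range, min_eq_left hab]
    exact List.map_congr_left fun x hx => h x (List.mem_range.mp hx)
  rw [h1]; exact List.take_prefix _ _

lemma approx_mono' (Φ : TuringFunctional) {X Y : ℕ → ℕ} {a b n v : ℕ} (hab : a ≤ b)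
    (h : ∀ i < a, X i = Y i) (hv : Φ.approx ((List.range a).map X) n = some v) :
    Φ.approx ((List.range b).map Y) n = some v :=
  Φ.mono (prefix_map_range hab h) hv

lemma evalsTo_agree (Φ : TuringFunctional) {X Y : ℕ → ℕ} {m n v : ℕ} (h : Φ.evalsTo X Y)
    (hv : Φ.approx ((List.range m).map X) n = some v) : v = Y n := by
  obtain ⟨m', hm'⟩ := h n
  rcases le_total m m' with hle | hle
  · have h2 := approx_mono' Φ hle (fun _ _ => rfl) hv
    rw [h2] at hm'; exact Option.some_inj.mp hm'
  · have h2 := approx_mono' Φ hle (fun _ _ => rfl) hm'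
    rw [h2] at hv; exact (Option.some_inj.mp hv).symm

lemma evalsTo_uniform (Φ : TuringFunctional) {X Y : ℕ → ℕ} (h : Φ.evalsTo X Y) (L : ℕ) :
    ∃ N, ∀ y < L, Φ.approx ((List.range N).map X) y = some (Y y) := by
  induction L with
  | zero => exact ⟨0, fun y hy => absurd hy (Nat.not_lt_zero y)⟩
  | succ L ih =>
    obtain ⟨N, hN⟩ := ih
    obtain ⟨M, hM⟩ := h L
    refine ⟨max N M, fun y hy => ?_⟩
    rcases Nat.lt_or_ge y L with hyL | hyL
    · exact approx_mono' Φ (le_max_left N M) (fun _ _ => rfl) (hN y hyL)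
    · have : y = L := by omega
      subst this
      exact approx_mono' Φ (le_max_right N M) (fun _ _ => rfl) hM

lemma join2_agree {f f' : ℕ → ℕ} {T T' : ℕ → Bool} {L : ℕ}
    (hf : ∀ i < L, f i = f' i) (hT : ∀ i < L, T i = T' i) :
    ∀ i < 2 * L, join2 f (bc T) i = join2 f' (bc T') i := by
  intro i hi
  by_cases h : i % 2 = 0
  · simp only [join2, if_pos h]
    exact hf _ (by omega)
  · simp only [join2, if_neg h, bc]
    exact congrArg Bool.toNat (hT _ (by omega))

def Forces (Ψ : TuringFunctional) (f : ℕ → ℕ) (T : ℕ → Bool) (L x : ℕ) : Prop :=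
  Ψ.approx ((List.range (2 * L)).map (join2 f (bc T))) x = some 1

lemma Forces.mono {Ψ : TuringFunctional} {f f' : ℕ → ℕ} {T T' : ℕ → Bool} {L L' x : ℕ}
    (h : Forces Ψ f T L x) (hL : L ≤ L')
    (hf : ∀ i < L, f i = f' i) (hT : ∀ i < L, T i = T' i) : Forces Ψ f' T' L' x :=
  approx_mono' Ψ (by omega) (join2_agree hf hT) h

lemma Forces.eval {Ψ : TuringFunctional} {f : ℕ → ℕ} {T Y : ℕ → Bool} {L x : ℕ}
    (h : Forces Ψ f T L x) (hY : Ψ.evalsTo (join2 f (bc T)) (bc Y)) : Y x = true := by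
  have := evalsTo_agree Ψ hY h
  cases hYx : Y x
  · rw [bc, hYx] at this; simp at this
  · rfl

lemma forces_of_eval {Ψ : TuringFunctional} {f : ℕ → ℕ} {T Y : ℕ → Bool} {x : ℕ}
    (hY : Ψ.evalsTo (join2 f (bc T)) (bc Y)) (hx : Y x = true) :
    ∃ M, ∀ L, M ≤ L → Forces Ψ f T L x := by
  obtain ⟨m, hm⟩ := hY x
  rw [bc, hx] at hm
  exact ⟨m, fun L hL => approx_mono' Ψ (by omega) (fun _ _ => rfl) hm⟩

lemma exists_infinite_fiber {g : ℕ → ℕ} {k : ℕ} (hg : ∀ x, g x < k) :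
    ∃ d < k, {x | g x = d}.Infinite := by
  by_contra h
  push_neg at h
  have hfin : (Set.univ : Set ℕ).Finite := by
    have hsub : (Set.univ : Set ℕ) ⊆ ⋃ d ∈ Finset.range k, {x | g x = d} := by
      intro x _
      simp only [Set.mem_iUnion, Finset.mem_range]
      exact ⟨g x, hg x, rfl⟩
    exact Set.Finite.subset (Set.Finite.biUnion (Finset.range k).finite_toSet
      (fun d hd => h d (Finset.mem_range.mp hd))) hsub
  exact Set.infinite_univ hfin

lemma exists_not_mem {D : Finset ℕ} {k : ℕ} (h : D ⊆ Finset.range k) (hc : D.card < k) :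
    ∃ c < k, c ∉ D := by
  have hne : (Finset.range k \ D).Nonempty := by
    apply Finset.card_pos.mp
    rw [Finset.card_sdiff_of_subset h, Finset.card_range]
    omega
  obtain ⟨c, hcm⟩ := hne
  rw [Finset.mem_sdiff, Finset.mem_range] at hcm
  exact ⟨c, hcm.1, hcm.2⟩

lemma infinite_of_unbounded {S : Set ℕ} (h : ∀ a, ∃ b ∈ S, a < b) : S.Infinite := by
  by_contra hfin
  rw [Set.not_infinite] at hfin
  rcases S.eq_empty_or_nonempty with he | hne
  · obtain ⟨b, hb, _⟩ := h 0; rw [he] at hb; exact hb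
  · obtain ⟨a, haS, ha⟩ := Set.Finite.exists_maximalFor id S hfin hne
    obtain ⟨b, hbS, hab⟩ := h a
    have := ha hbS (le_of_lt hab)
    simp only [id] at this
    omega

def Hyp (j k : ℕ) (Φ Ψ : TuringFunctional) : Prop :=
  ∀ f : ℕ → ℕ, (∀ x, f x < j) →
    ∃ g : ℕ → ℕ, (∀ x, g x < k) ∧ Φ.evalsTo f g ∧
      ∀ T : ℕ → Bool, {x | T x = true}.Infinite →
        (∃ c < k, ∀ x, T x = true → g x ≠ c) →
        ∃ Y : ℕ → Bool, Ψ.evalsTo (join2 f (bc T)) (bc Y) ∧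
          {x | Y x = true}.Infinite ∧ ∃ c < j, ∀ x, Y x = true → f x ≠ c



lemma free_lemma {j k : ℕ} (Φ Ψ : TuringFunctional) (hj : 2 ≤ j) (hjk : j < k)
    (H : Hyp j k Φ Ψ) (f₀ : ℕ → ℕ) (n₀ m d : ℕ) (hm : m ≤ n₀) (hd : d < k)
    (hf₀ : ∀ x, f₀ x < j)
    (hfree : ∀ f' : ℕ → ℕ, (∀ x, f' x < j) → (∀ i < n₀, f₀ i = f' i) →
      ∀ x, m ≤ x → ∀ M v, Φ.approx ((List.range M).map f') x = some v → v ≠ d) :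
    False := by
  classical
  have hst : ∀ i, i ≤ j → ∃ (f : ℕ → ℕ) (T : ℕ → Bool) (n : ℕ),
      (∀ x, f x < j) ∧ n₀ ≤ n ∧ (∀ i' < n₀, f₀ i' = f i') ∧
      (∀ x, T x = true → m ≤ x ∧ x < n) ∧
      (∀ c < i, ∃ x, x < n ∧ f x = c ∧ Forces Ψ f T n x) := by
    intro i hi
    induction i with
    | zero =>
      exact ⟨f₀, fun _ => false, n₀, hf₀, le_refl _, fun _ _ => rfl,
        fun x hx => by simp at hx, fun c hc => absurd hc (Nat.not_lt_zero c)⟩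
    | succ i ih =>
      obtain ⟨f, T, n, hb, hn₀, hagree, hTr, hwit⟩ := ih (by omega)
      have hij : i < j := by omega
      by_cases hQ : ∃ (f' : ℕ → ℕ) (T' : ℕ → Bool) (n' : ℕ),
          (∀ x, f' x < j) ∧ n ≤ n' ∧ (∀ i' < n, f i' = f' i') ∧ (∀ i' < n, T i' = T' i') ∧
          (∀ x, T' x = true → m ≤ x ∧ x < n') ∧
          ∃ x, n ≤ x ∧ x < n' ∧ f' x = i ∧ Forces Ψ f' T' n' x
      · obtain ⟨f', T', n', hb', hnn', hfa, hTa, hTr', x, hxn, hxn', hfx, hFx⟩ := hQ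
        refine ⟨f', T', n', hb', le_trans hn₀ hnn',
          fun i' hi' => (hagree i' hi').trans (hfa i' (by omega)), hTr', ?_⟩
        intro c hc
        rcases Nat.lt_or_ge c i with hci | hci
        · obtain ⟨y, hyn, hyc, hyF⟩ := hwit c hci
          exact ⟨y, by omega, (hfa y hyn).symm.trans hyc, hyF.mono hnn' hfa hTa⟩
        · have hceq : c = i := by omega
          subst hceq
          exact ⟨x, hxn', hfx, hFx⟩
      · exfalso
        set F : ℕ → ℕ := fun x => if x < n then f x else i with hF
        set TT : ℕ → Bool := fun x => if x < n then T x else true with hTT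
        have hFb : ∀ x, F x < j := by
          intro x; rw [hF]; dsimp only; split
          · exact hb x
          · exact hij
        have hFag : ∀ i' < n, f i' = F i' := by
          intro i' hi'; rw [hF]; dsimp only; rw [if_pos hi']
        have hTag : ∀ i' < n, T i' = TT i' := by
          intro i' hi'; rw [hTT]; dsimp only; rw [if_pos hi']
        have hFag₀ : ∀ i' < n₀, f₀ i' = F i' := fun i' hi' =>
          (hagree i' hi').trans (hFag i' (by omega))
        obtain ⟨g, hgk, hgev, hcl⟩ := H F hFb
        have hTinf : {x | TT x = true}.Infinite := by
          apply (Set.Ici_infinite n).mono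
          intro x hx
          have : ¬ x < n := by exact not_lt.mpr hx
          simp only [Set.mem_setOf_eq, hTT, if_neg this]
        have hthin : ∀ x, TT x = true → g x ≠ d := by
          intro x hTTx
          have hxm : m ≤ x := by
            rw [hTT] at hTTx; dsimp only at hTTx
            split at hTTx
            · exact (hTr x hTTx).1
            · omega
          obtain ⟨M, hM⟩ := hgev x
          exact hfree F hFb hFag₀ x hxm M (g x) hM
        obtain ⟨Y, hYev, hYinf, hYthin⟩ := hcl TT hTinf ⟨d, hd, hthin⟩
        obtain ⟨xh, hxhY, hxhn⟩ := hYinf.exists_gt n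
        obtain ⟨M, hMF⟩ := forces_of_eval hYev hxhY
        set L := M + xh + n + 1 with hL
        have hFor : Forces Ψ F TT L xh := hMF L (by omega)
        set T' : ℕ → Bool := fun y => decide (y < L) && TT y with hT'
        have hTTag : ∀ i' < L, TT i' = T' i' := by
          intro i' hi'; rw [hT']; dsimp only
          rw [decide_eq_true hi', Bool.true_and]
        have hFor' : Forces Ψ F T' L xh := hFor.mono (le_refl L) (fun _ _ => rfl) hTTag
        apply hQ
        refine ⟨F, T', L, hFb, by omega, hFag, fun i' hi' => (hTag i' hi').trans (hTTag i' (by omega)),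
          ?_, xh, by omega, by omega, ?_, hFor'⟩
        · intro x hx
          rw [hT'] at hx; dsimp only at hx
          rw [Bool.and_eq_true, decide_eq_true_eq] at hx
          refine ⟨?_, hx.1⟩
          have := hx.2
          rw [hTT] at this; dsimp only at this
          split at this
          · exact (hTr x this).1
          · omega
        · rw [hF]; dsimp only; rw [if_neg (by omega)]
  -- final stage
  obtain ⟨f, T, n, hb, hn₀, hagree, hTr, hwit⟩ := hst j le_rfl
  set TT : ℕ → Bool := fun x => if x < n then T x else true with hTT
  have hTag : ∀ i' < n, T i' = TT i' := by
    intro i' hi'; rw [hTT]; dsimp only; rw [if_pos hi']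
  have hFag₀ : ∀ i' < n₀, f₀ i' = f i' := hagree
  obtain ⟨g, hgk, hgev, hcl⟩ := H f hb
  have hTinf : {x | TT x = true}.Infinite := by
    apply (Set.Ici_infinite n).mono
    intro x hx
    have : ¬ x < n := not_lt.mpr hx
    simp only [Set.mem_setOf_eq, hTT, if_neg this]
  have hthin : ∀ x, TT x = true → g x ≠ d := by
    intro x hTTx
    have hxm : m ≤ x := by
      rw [hTT] at hTTx; dsimp only at hTTx
      split at hTTx
      · exact (hTr x hTTx).1
      · omega
    obtain ⟨M, hM⟩ := hgev x
    exact hfree f hb hFag₀ x hxm M (g x) hM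
  obtain ⟨Y, hYev, hYinf, hYthin⟩ := hcl TT hTinf ⟨d, hd, hthin⟩
  obtain ⟨c, hcj, hYc⟩ := hYthin
  obtain ⟨x, hxn, hfx, hFx⟩ := hwit c hcj
  have hFx' : Forces Ψ f TT n x := hFx.mono (le_refl n) (fun _ _ => rfl) hTag
  exact hYc x (hFx'.eval hYev) hfx



lemma main_st {j k : ℕ} (Φ Ψ : TuringFunctional) (hj : 2 ≤ j) (hjk : j < k)
    (H : Hyp j k Φ Ψ) :
    ∀ i ≤ j, ∃ (f : ℕ → ℕ) (T : ℕ → Bool) (n : ℕ) (D : Finset ℕ),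
      (∀ x, f x < j) ∧ D ⊆ Finset.range k ∧ D.card ≤ i ∧ (1 ≤ i → D.Nonempty) ∧
      (∀ x, T x = true → x < n ∧ ∃ v ∈ D, Φ.approx ((List.range n).map f) x = some v) ∧
      (∀ c < i, ∃ x, x < n ∧ f x = c ∧ Forces Ψ f T n x) := by
  intro i hi
  induction i with
  | zero =>
    exact ⟨fun _ => 0, fun _ => false, 0, ∅, fun _ => show 0 < j by omega, Finset.empty_subset _,
      by simp, by omega, fun x hx => by simp at hx, fun c hc => absurd hc (Nat.not_lt_zero c)⟩
  | succ i ih =>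
    obtain ⟨f, T, n, D, hb, hDk, hDc, _hDne, hTr, hwit⟩ := ih (by omega)
    have hij : i < j := by omega
    by_cases hQ : ∃ d < k, ∃ (f' : ℕ → ℕ) (T' : ℕ → Bool) (n' : ℕ),
        (∀ x, f' x < j) ∧ n ≤ n' ∧ (∀ i' < n, f i' = f' i') ∧ (∀ i' < n, T i' = T' i') ∧
        (∀ x, T' x = true → x < n' ∧ ∃ v ∈ insert d D,
          Φ.approx ((List.range n').map f') x = some v) ∧
        ∃ x, n ≤ x ∧ x < n' ∧ f' x = i ∧ Forces Ψ f' T' n' x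
    · obtain ⟨d, hdk, f', T', n', hb', hnn', hfa, hTa, hTr', x, hxn, hxn', hfx, hFx⟩ := hQ
      refine ⟨f', T', n', insert d D, hb',
        Finset.insert_subset (Finset.mem_range.mpr hdk) hDk,
        le_trans (Finset.card_insert_le d D) (by omega),
        fun _ => Finset.insert_nonempty d D, hTr', ?_⟩
      intro c hc
      rcases Nat.lt_or_ge c i with hci | hci
      · obtain ⟨y, hyn, hyc, hyF⟩ := hwit c hci
        exact ⟨y, by omega, (hfa y hyn).symm.trans hyc, hyF.mono hnn' hfa hTa⟩
      · have hceq : c = i := by omega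
        subst hceq
        exact ⟨x, hxn', hfx, hFx⟩
    · exfalso
      set F : ℕ → ℕ := fun x => if x < n then f x else i with hF
      have hFb : ∀ x, F x < j := by
        intro x; rw [hF]; dsimp only; split
        · exact hb x
        · exact hij
      have hFag : ∀ i' < n, f i' = F i' := by
        intro i' hi'; rw [hF]; dsimp only; rw [if_pos hi']
      obtain ⟨g, hgk, hgev, hcl⟩ := H F hFb
      obtain ⟨ds, hdsk, hdsinf⟩ := exists_infinite_fiber hgk
      classical
      set TT : ℕ → Bool := fun x => if x < n then T x else decide (g x ∈ insert ds D) with hTT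
      have hTag : ∀ i' < n, T i' = TT i' := by
        intro i' hi'; rw [hTT]; dsimp only; rw [if_pos hi']
      have hTinf : {x | TT x = true}.Infinite := by
        apply (hdsinf.diff (Set.finite_Iio n)).mono
        rintro x ⟨hgx, hxn⟩
        simp only [Set.mem_setOf_eq] at hgx ⊢
        rw [Set.mem_Iio, not_lt] at hxn
        rw [hTT]; dsimp only
        rw [if_neg (by omega), decide_eq_true_eq]
        rw [hgx]; exact Finset.mem_insert_self ds D
      have hDk' : insert ds D ⊆ Finset.range k :=
        Finset.insert_subset (Finset.mem_range.mpr hdsk) hDk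
      obtain ⟨c, hck, hcD⟩ := exists_not_mem hDk'
        (lt_of_le_of_lt (Finset.card_insert_le ds D) (by omega))
      have hthin : ∀ x, TT x = true → g x ≠ c := by
        intro x hTTx
        rw [hTT] at hTTx; dsimp only at hTTx
        split at hTTx
        · obtain ⟨_, v, hvD, happ⟩ := hTr x hTTx
          have happ' : Φ.approx ((List.range n).map F) x = some v :=
            approx_mono' Φ (le_refl n) hFag happ
          have := evalsTo_agree Φ hgev happ'
          intro hgc; rw [hgc] at this; subst this
          exact hcD (Finset.mem_insert_of_mem hvD)
        · rw [decide_eq_true_eq] at hTTx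
          intro hgc; rw [hgc] at hTTx; exact hcD hTTx
      obtain ⟨Y, hYev, hYinf, hYthin⟩ := hcl TT hTinf ⟨c, hck, hthin⟩
      obtain ⟨xh, hxhY, hxhn⟩ := hYinf.exists_gt n
      obtain ⟨M, hMF⟩ := forces_of_eval hYev hxhY
      set L := M + xh + n + 1 with hL
      have hFor : Forces Ψ F TT L xh := hMF L (by omega)
      set T' : ℕ → Bool := fun y => decide (y < L) && TT y with hT'
      have hTTag : ∀ i' < L, TT i' = T' i' := by
        intro i' hi'; rw [hT']; dsimp only
        rw [decide_eq_true hi', Bool.true_and]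
      have hFor' : Forces Ψ F T' L xh := hFor.mono (le_refl L) (fun _ _ => rfl) hTTag
      obtain ⟨N, hN⟩ := evalsTo_uniform Φ hgev L
      set N' := max N L with hN'
      apply hQ
      refine ⟨ds, hdsk, F, T', N', hFb, by omega,
        hFag, fun i' hi' => (hTag i' hi').trans (hTTag i' (by omega)), ?_,
        xh, by omega, by omega, ?_, hFor'.mono (le_max_right N L) (fun _ _ => rfl) (fun _ _ => rfl)⟩
      · intro x hx
        rw [hT'] at hx; dsimp only at hx
        rw [Bool.and_eq_true, decide_eq_true_eq] at hx
        obtain ⟨hxL, hxTT⟩ := hx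
        refine ⟨by omega, ?_⟩
        rw [hTT] at hxTT; dsimp only at hxTT
        split at hxTT
        · obtain ⟨_, v, hvD, happ⟩ := hTr x hxTT
          exact ⟨v, Finset.mem_insert_of_mem hvD,
            approx_mono' Φ (by omega) hFag happ⟩
        · rw [decide_eq_true_eq] at hxTT
          exact ⟨g x, hxTT, approx_mono' Φ (le_max_left N L) (fun _ _ => rfl) (hN x hxL)⟩
      · rw [hF]; dsimp only; rw [if_neg (by omega)]



abbrev Cond := (ℕ → ℕ) × (ℕ → Bool) × ℕ

abbrev InvP (Φ : TuringFunctional) (j ns : ℕ) (fs : ℕ → ℕ) (Ts : ℕ → Bool)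
    (D : Finset ℕ) (p : Cond) : Prop :=
  (∀ x, p.1 x < j) ∧ ns ≤ p.2.2 ∧ (∀ i < ns, fs i = p.1 i) ∧ (∀ i < ns, Ts i = p.2.1 i) ∧
  (∀ x, p.2.1 x = true → x < p.2.2 ∧ ∃ v ∈ D,
    Φ.approx ((List.range p.2.2).map p.1) x = some v)

abbrev RelP (Φ : TuringFunctional) (j ns : ℕ) (fs : ℕ → ℕ) (Ts : ℕ → Bool)
    (D : Finset ℕ) (p q : Cond) (t : ℕ) : Prop :=
  InvP Φ j ns fs Ts D q ∧ p.2.2 ≤ q.2.2 ∧ t < q.2.2 ∧ (∀ i < p.2.2, p.1 i = q.1 i) ∧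
  (∀ i < p.2.2, p.2.1 i = q.2.1 i) ∧ ∃ x, t ≤ x ∧ q.2.1 x = true

lemma main_false {j k : ℕ} (Φ Ψ : TuringFunctional) (hj : 2 ≤ j) (hjk : j < k)
    (H : Hyp j k Φ Ψ) : False := by
  classical
  obtain ⟨fs, Ts, ns, D, hb, hDk, hDc, hDne, hTr, hwit⟩ := main_st Φ Ψ hj hjk H j le_rfl
  have hDne' : D.Nonempty := hDne (by omega)
  by_cases hP : ∀ (f' : ℕ → ℕ) (n' : ℕ), (∀ x, f' x < j) → (∀ i < ns, fs i = f' i) → ns ≤ n' →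
      ∀ m, ∃ (f'' : ℕ → ℕ) (n'' x v : ℕ), (∀ y, f'' y < j) ∧ (∀ i < n', f' i = f'' i) ∧
        m ≤ x ∧ v ∈ D ∧ Φ.approx ((List.range n'').map f'') x = some v
  · -- ω-construction
    have step2 : ∀ (p : Cond) (t : ℕ), ∃ q : Cond,
        InvP Φ j ns fs Ts D p → RelP Φ j ns fs Ts D p q t := by
      intro p t
      by_cases hp : InvP Φ j ns fs Ts D p
      · obtain ⟨hb1, hn1, hagf, hagT, htr⟩ := hp
        obtain ⟨f'', n'', x, v, hb'', hag'', hx, hvD, happ⟩ :=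
          hP p.1 p.2.2 hb1 hagf hn1 (max t p.2.2)
        have hxt : t ≤ x := le_trans (le_max_left _ _) hx
        have hxp : p.2.2 ≤ x := le_trans (le_max_right _ _) hx
        refine ⟨⟨f'', fun y => if y = x then true else p.2.1 y,
          max (max n'' (x+1)) (max (t+1) p.2.2)⟩, fun _ => ?_⟩
        refine ⟨⟨hb'', by dsimp only; omega, fun i hi => (hagf i hi).trans (hag'' i (by omega)),
          fun i hi => by
            dsimp only
            rw [if_neg (by omega)]
            exact hagT i hi, ?_⟩, by dsimp only; omega, by dsimp only; omega, hag'',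
          fun i hi => by dsimp only; rw [if_neg (by omega)],
          x, hxt, by dsimp only; rw [if_pos rfl]⟩
        intro y hy
        dsimp only at hy ⊢
        by_cases hyx : y = x
        · subst hyx
          exact ⟨by omega, v, hvD, approx_mono' Φ (by omega) (fun _ _ => rfl) happ⟩
        · rw [if_neg hyx] at hy
          obtain ⟨hlt, v', hv'D, happ'⟩ := htr y hy
          exact ⟨by omega, v', hv'D, approx_mono' Φ (by omega) hag'' happ'⟩
      · exact ⟨p, fun h => absurd h hp⟩
    let seq : ℕ → Cond := fun t =>
      Nat.rec (⟨fs, Ts, ns⟩ : Cond) (fun t ih => (step2 ih t).choose) t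
    have hseqS : ∀ t, seq (t+1) = (step2 (seq t) t).choose := fun t => rfl
    have hseq0 : seq 0 = (⟨fs, Ts, ns⟩ : Cond) := rfl
    have hInv : ∀ t, InvP Φ j ns fs Ts D (seq t) := by
      intro t
      induction t with
      | zero => exact ⟨hb, le_rfl, fun _ _ => rfl, fun _ _ => rfl, hTr⟩
      | succ t ih =>
        rw [hseqS t]
        exact ((step2 (seq t) t).choose_spec ih).1
    have hRel : ∀ t, RelP Φ j ns fs Ts D (seq t) (seq (t+1)) t := by
      intro t
      rw [hseqS t]
      exact (step2 (seq t) t).choose_spec (hInv t)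
    have hnmono : ∀ t t', t ≤ t' → (seq t).2.2 ≤ (seq t').2.2 := by
      intro t t' h
      induction t', h using Nat.le_induction with
      | base => exact le_rfl
      | succ m hm ih => exact le_trans ih (hRel m).2.1
    have hagf : ∀ t t', t ≤ t' → ∀ i < (seq t).2.2, (seq t).1 i = (seq t').1 i := by
      intro t t' h
      induction t', h using Nat.le_induction with
      | base => exact fun i _ => rfl
      | succ m hm ih =>
        intro i hi
        exact (ih i hi).trans ((hRel m).2.2.2.1 i (lt_of_lt_of_le hi (hnmono t m hm)))
    have hagT : ∀ t t', t ≤ t' → ∀ i < (seq t).2.2, (seq t).2.1 i = (seq t').2.1 i := by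
      intro t t' h
      induction t', h using Nat.le_induction with
      | base => exact fun i _ => rfl
      | succ m hm ih =>
        intro i hi
        exact (ih i hi).trans ((hRel m).2.2.2.2.1 i (lt_of_lt_of_le hi (hnmono t m hm)))
    have hnt : ∀ t, t ≤ (seq t).2.2 := by
      intro t
      induction t with
      | zero => exact Nat.zero_le _
      | succ t _ => exact (hRel t).2.2.1
    set F : ℕ → ℕ := fun x => (seq (x+1)).1 x with hFdef
    set TI : ℕ → Bool := fun x => (seq (x+1)).2.1 x with hTIdef
    have hFt : ∀ t, ∀ i, i < (seq t).2.2 → (seq t).1 i = F i := by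
      intro t i hi
      rcases le_total t (i+1) with h | h
      · exact hagf t (i+1) h i hi
      · exact (hagf (i+1) t h i (lt_of_lt_of_le (Nat.lt_succ_self i) (hnt (i+1)))).symm
    have hTt : ∀ t, ∀ i, i < (seq t).2.2 → (seq t).2.1 i = TI i := by
      intro t i hi
      rcases le_total t (i+1) with h | h
      · exact hagT t (i+1) h i hi
      · exact (hagT (i+1) t h i (lt_of_lt_of_le (Nat.lt_succ_self i) (hnt (i+1)))).symm
    have hFb : ∀ x, F x < j := fun x => (hInv (x+1)).1 x
    obtain ⟨g, hgk, hgev, hcl⟩ := H F hFb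
    have hTIinf : {x | TI x = true}.Infinite := by
      apply infinite_of_unbounded
      intro a
      obtain ⟨x, hax, hxT⟩ := (hRel (a+1)).2.2.2.2.2
      have hxlt : x < (seq (a+2)).2.2 := ((hInv (a+2)).2.2.2.2 x hxT).1
      refine ⟨x, ?_, by omega⟩
      show TI x = true
      rw [← hTt (a+2) x hxlt]
      exact hxT
    obtain ⟨c, hck, hcD⟩ := exists_not_mem hDk (lt_of_le_of_lt hDc hjk)
    have hthin : ∀ x, TI x = true → g x ≠ c := by
      intro x hTIx
      obtain ⟨hlt, v, hvD, happ⟩ := (hInv (x+1)).2.2.2.2 x hTIx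
      have happ' : Φ.approx ((List.range (seq (x+1)).2.2).map F) x = some v :=
        approx_mono' Φ le_rfl (hFt (x+1)) happ
      have hveq := evalsTo_agree Φ hgev happ'
      intro hgc
      rw [hgc] at hveq; subst hveq
      exact hcD hvD
    obtain ⟨Y, hYev, _hYinf, hYthin⟩ := hcl TI hTIinf ⟨c, hck, hthin⟩
    obtain ⟨c', hc'j, hYc'⟩ := hYthin
    obtain ⟨x, hxn, hfx, hFx⟩ := hwit c' hc'j
    have hag0f : ∀ i < ns, fs i = F i := by
      intro i hi
      have := hFt 0 i (by rw [hseq0]; exact hi)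
      rw [hseq0] at this
      exact this
    have hag0T : ∀ i < ns, Ts i = TI i := by
      intro i hi
      have := hTt 0 i (by rw [hseq0]; exact hi)
      rw [hseq0] at this
      exact this
    have hFx' : Forces Ψ F TI ns x := hFx.mono le_rfl hag0f hag0T
    have hYx : Y x = true := hFx'.eval hYev
    have hFxc : F x = c' := by rw [← hag0f x hxn]; exact hfx
    exact hYc' x hYx hFxc
  · push_neg at hP
    obtain ⟨f', n', hb', hag', hnn', m, hm⟩ := hP
    obtain ⟨d₀, hd₀⟩ := hDne'
    have hd₀k : d₀ < k := Finset.mem_range.mp (hDk hd₀)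
    apply free_lemma Φ Ψ hj hjk H f' (max n' m) (max n' m) d₀ le_rfl hd₀k hb'
    intro f'' hb'' hag'' x hx M v happ hvd
    refine hm f'' M x v hb'' (fun i hi => hag'' i (by omega)) (by omega) ?_ happ
    rw [hvd]; exact hd₀

end Stmt16Aux

/-- For `2 ≤ j < k`, the thin set theorem for `j` colors (exponent 1) is not Weihrauch
reducible to the thin set theorem for `k` colors: there are no Turing functionals
`Φ, Ψ` such that for every `f : ℕ → Fin j`, `Φ(f)` is a coloring `ℕ → Fin k`, and for
every infinite set `T` thin for `Φ(f)`, `Ψ(f ⊕ T)` is an infinite set thin for `f`. -/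
theorem stmt16 (j k : ℕ) (hj : 2 ≤ j) (hjk : j < k) :
    ¬ ∃ Φ Ψ : TuringFunctional,
      ∀ f : ℕ → ℕ, (∀ x, f x < j) →
        ∃ g : ℕ → ℕ, (∀ x, g x < k) ∧ Φ.evalsTo f g ∧
          ∀ T : ℕ → Bool, {x | T x = true}.Infinite →
            (∃ c < k, ∀ x, T x = true → g x ≠ c) →
            ∃ Y : ℕ → Bool, Ψ.evalsTo (join2 f (bc T)) (bc Y) ∧
              {x | Y x = true}.Infinite ∧ ∃ c < j, ∀ x, Y x = true → f x ≠ c := by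
  rintro ⟨Φ, Ψ, H⟩
  exact Stmt16Aux.main_false Φ Ψ hj hjk H
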